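/- Let G = (V,E) be a graph and G' its d-inflation (each edge replaced by a chain of 2d new vertices). For a stabilizer element S = ∏_{u∈U} g_u of the graph state of G with sign χ (so S = χ ⊗_v σ_v), the inflated stabilizer element S' = ∏_{u∈U} f_u of the graph state of G', where f_u = g'_u ∏_{(u,v)∈E, s=1..d} g'_{(2s)_{(u,v)}}, has Pauli-product representation with the same sign χ; moreover, its Pauli operator on each power vertex u equals σ_u, and on each chain vertex it is either X or I. -/

import Mathlib

open scoped Classical

inductive Pauli | I | X | Y | Z
deriving DecidableEq

noncomputable def pauliMat : Pauli → Matrix (Fin 2) (Fin 2) ℂ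
  | Pauli.I => 1
  | Pauli.X => !![0, 1; 1, 0]
  | Pauli.Y => !![0, -Complex.I; Complex.I, 0]
  | Pauli.Z => !![1, 0; 0, -1]

noncomputable def pauliProd {V : Type} [Fintype V] [DecidableEq V] (σ : V → Pauli) :
    Matrix (V → Fin 2) (V → Fin 2) ℂ :=
  fun f g => ∏ v, pauliMat (σ v) (f v) (g v)

noncomputable def graphGen {V : Type} [Fintype V] [DecidableEq V] (G : SimpleGraph V) (v : V) :
    Matrix (V → Fin 2) (V → Fin 2) ℂ :=
  pauliProd (fun u => if u = v then Pauli.X else if G.Adj u v then Pauli.Z else Pauli.I)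

noncomputable def graphState {V : Type} [Fintype V] [DecidableEq V] (G : SimpleGraph V) :
    (V → Fin 2) → ℂ :=
  fun f => (-1 : ℂ) ^ (∑ e ∈ G.edgeFinset,
      Sym2.lift ⟨fun u v => (f u : ℕ) * (f v : ℕ), fun u v => Nat.mul_comm _ _⟩ e) /
    (Real.sqrt (2 ^ Fintype.card V) : ℂ)

noncomputable def expVal {V : Type} [Fintype V] [DecidableEq V]
    (ψ : (V → Fin 2) → ℂ) (P : Matrix (V → Fin 2) (V → Fin 2) ℂ) : ℂ :=
  ∑ f, ∑ g, (starRingEnd ℂ) (ψ f) * P f g * ψ g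

/-- The original graph on `V` determined by an oriented edge list `e`. -/
def origGraph {V : Type} (m : ℕ) (e : Fin m → V × V) : SimpleGraph V :=
  SimpleGraph.fromRel (fun u v => ∃ j, e j = (u, v))

/-- Adjacency seed relation of the `d`-inflated graph: each oriented edge `e j` is
replaced by a chain of `2d` chain vertices `(j, 0), …, (j, 2d - 1)` joining its
endpoints. -/
def inflAdj {V : Type} (m d : ℕ) (e : Fin m → V × V) :
    (V ⊕ (Fin m × Fin (2 * d))) → (V ⊕ (Fin m × Fin (2 * d))) → Prop
  | Sum.inl u, Sum.inr (j, r) =>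
      ((e j).1 = u ∧ (r : ℕ) = 0) ∨ ((e j).2 = u ∧ (r : ℕ) = 2 * d - 1)
  | Sum.inr (j, r), Sum.inr (j', r') => j = j' ∧ (r : ℕ) + 1 = (r' : ℕ)
  | _, _ => False

/-- The `d`-inflated graph. -/
def inflGraph {V : Type} (m d : ℕ) (e : Fin m → V × V) :
    SimpleGraph (V ⊕ (Fin m × Fin (2 * d))) :=
  SimpleGraph.fromRel (inflAdj m d e)

/-- The stabilizer generator of the inflated graph state at the chain vertex of
edge `j` with (0-indexed) position `r`; `1` if `r` is out of range. -/
noncomputable def chainGen {V : Type} [Fintype V] [DecidableEq V] (m d : ℕ)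
    (e : Fin m → V × V) (j : Fin m) (r : ℕ) :
    Matrix ((V ⊕ (Fin m × Fin (2 * d))) → Fin 2) ((V ⊕ (Fin m × Fin (2 * d))) → Fin 2) ℂ :=
  if h : r < 2 * d then graphGen (inflGraph m d e) (Sum.inr (j, ⟨r, h⟩)) else 1

/-- The inflated generator element
`f_u = g'_u ∏_{(u,v) ∈ E} ∏_{s=1}^{d} g'_{(2s)_{(u,v)}}`; the chain vertex at
distance `2s` from `u` has 0-indexed position `2s - 1` if `e j = (u, v)` and
`2d - 2s` if `e j = (v, u)`. -/
noncomputable def inflGen {V : Type} [Fintype V] [DecidableEq V] (m d : ℕ)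
    (e : Fin m → V × V) (u : V) :
    Matrix ((V ⊕ (Fin m × Fin (2 * d))) → Fin 2) ((V ⊕ (Fin m × Fin (2 * d))) → Fin 2) ℂ :=
  graphGen (inflGraph m d e) (Sum.inl u) *
    ((List.finRange m).map (fun j =>
      ((List.range d).map (fun s =>
        if (e j).1 = u then chainGen m d e j (2 * s + 1)
        else if (e j).2 = u then chainGen m d e j (2 * d - 2 * s - 2)
        else 1)).prod)).prod

/-- The inflated measurement: the original Pauli on power vertices, `X` on all
chain vertices. -/
def inflMeas {V : Type} {m d : ℕ} (M : V → Pauli) : (V ⊕ (Fin m × Fin (2 * d))) → Pauli :=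
  Sum.elim M (fun _ => Pauli.X)

namespace Lemma2Aux

open Pauli

instance : Fintype Pauli :=
  ⟨{Pauli.I, Pauli.X, Pauli.Y, Pauli.Z}, by intro x; cases x <;> simp⟩

/-- Pauli multiplication modulo phase. -/
def pmul : Pauli → Pauli → Pauli
  | I, p => p
  | p, I => p
  | X, X => I
  | X, Y => Z
  | X, Z => Y
  | Y, X => Z
  | Y, Y => I
  | Y, Z => X
  | Z, X => Y
  | Z, Y => X
  | Z, Z => I

/-- Phase of Pauli multiplication. -/
noncomputable def pphase : Pauli → Pauli → ℂ
  | X, Y => Complex.I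
  | X, Z => -Complex.I
  | Y, X => -Complex.I
  | Y, Z => Complex.I
  | Z, X => Complex.I
  | Z, Y => -Complex.I
  | _, _ => 1

lemma pmul_I (p : Pauli) : pmul p I = p := by cases p <;> rfl
lemma pmul_self (p : Pauli) : pmul p p = I := by cases p <;> rfl
lemma pphase_self (p : Pauli) : pphase p p = 1 := by cases p <;> rfl
lemma pphase_I_left (p : Pauli) : pphase I p = 1 := by cases p <;> rfl
lemma pphase_I_right (p : Pauli) : pphase p I = 1 := by cases p <;> rfl
lemma pmul_eq_I_iff (p q : Pauli) : pmul p q = I ↔ p = q := by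
  cases p <;> cases q <;> simp [pmul]

lemma pauliMat_mul (p q : Pauli) :
    pauliMat p * pauliMat q = pphase p q • pauliMat (pmul p q) := by
  cases p <;> cases q <;>
    simp [pauliMat, pmul, pphase, Matrix.one_fin_two] <;>
    · ext i j
      fin_cases i <;> fin_cases j <;>
        simp [Matrix.mul_apply, Fin.sum_univ_two, Complex.ext_iff]

end Lemma2Aux
namespace Lemma2Aux

variable {W : Type} [Fintype W] [DecidableEq W]

lemma pauliProd_constI : pauliProd (fun _ : W => Pauli.I) = 1 := by
  ext f g
  by_cases h : f = g
  · subst h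
    simp [pauliProd, pauliMat, Matrix.one_apply]
  · obtain ⟨v, hv⟩ := Function.ne_iff.mp h
    rw [pauliProd, Matrix.one_apply_ne h]
    exact Finset.prod_eq_zero (Finset.mem_univ v) (by simp [pauliMat, Matrix.one_apply_ne hv])

lemma pauliProd_mul (σ τ : W → Pauli) :
    pauliProd σ * pauliProd τ =
      (∏ v, pphase (σ v) (τ v)) • pauliProd (fun v => pmul (σ v) (τ v)) := by
  ext f g
  simp only [Matrix.mul_apply, pauliProd, Matrix.smul_apply, smul_eq_mul]
  calc
    ∑ h : W → Fin 2, (∏ v, pauliMat (σ v) (f v) (h v)) * ∏ v, pauliMat (τ v) (h v) (g v)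
        = ∑ h : W → Fin 2, ∏ v, (pauliMat (σ v) (f v) (h v) * pauliMat (τ v) (h v) (g v)) := by
          exact Finset.sum_congr rfl fun h _ => (Finset.prod_mul_distrib).symm
    _ = ∏ v, ∑ x : Fin 2, pauliMat (σ v) (f v) x * pauliMat (τ v) x (g v) := by
          rw [Finset.prod_univ_sum (fun _ => (Finset.univ : Finset (Fin 2)))
            (fun v x => pauliMat (σ v) (f v) x * pauliMat (τ v) x (g v)), Fintype.piFinset_univ]
    _ = ∏ v, (pauliMat (σ v) * pauliMat (τ v)) (f v) (g v) := by
          simp [Matrix.mul_apply]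
    _ = ∏ v, (pphase (σ v) (τ v) * pauliMat (pmul (σ v) (τ v)) (f v) (g v)) := by
          refine Finset.prod_congr rfl fun v _ => ?_
          rw [pauliMat_mul]; simp
    _ = (∏ v, pphase (σ v) (τ v)) * ∏ v, pauliMat (pmul (σ v) (τ v)) (f v) (g v) :=
          Finset.prod_mul_distrib

lemma pauliProd_trace (τ : W → Pauli) :
    ∑ f : W → Fin 2, pauliProd τ f f = ∏ v, (if τ v = Pauli.I then (2 : ℂ) else 0) := by
  have : ∑ f : W → Fin 2, pauliProd τ f f = ∏ v, ∑ x : Fin 2, pauliMat (τ v) x x := by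
    rw [Finset.prod_univ_sum (fun _ => (Finset.univ : Finset (Fin 2)))
      (fun v x => pauliMat (τ v) x x), Fintype.piFinset_univ]
    rfl
  rw [this]
  refine Finset.prod_congr rfl fun v _ => ?_
  cases τ v <;> simp [pauliMat, Fin.sum_univ_two, Matrix.one_apply] <;> norm_num

/-- Extraction of sign and word from an equality of scaled Pauli products. -/
lemma pauli_extract {c χ : ℂ} (hχ : χ ≠ 0) {ρ σ : W → Pauli}
    (h : c • pauliProd ρ = χ • pauliProd σ) : c = χ ∧ ρ = σ := by
  have h2 := congrArg (fun M => ∑ f : W → Fin 2, (M * pauliProd σ) f f) h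
  simp only [Matrix.smul_mul] at h2
  rw [pauliProd_mul ρ σ, pauliProd_mul σ σ] at h2
  simp only [smul_smul, Matrix.smul_apply, smul_eq_mul, ← Finset.mul_sum] at h2
  rw [pauliProd_trace, pauliProd_trace] at h2
  simp only [pphase_self, pmul_self, Finset.prod_const_one, one_mul, if_pos rfl] at h2
  have hP : (∏ _v : W, (2:ℂ)) ≠ 0 := Finset.prod_ne_zero_iff.2 fun _ _ => two_ne_zero
  have hL : c * ((∏ v, pphase (ρ v) (σ v)) *
      ∏ v, (if pmul (ρ v) (σ v) = Pauli.I then (2:ℂ) else 0)) ≠ 0 := by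
    rw [h2]; exact mul_ne_zero hχ hP
  have hB : (∏ v, (if pmul (ρ v) (σ v) = Pauli.I then (2:ℂ) else 0)) ≠ 0 :=
    right_ne_zero_of_mul (right_ne_zero_of_mul (by rwa [← mul_assoc] at hL))
  have hρσ : ρ = σ := by
    funext v
    have hv := Finset.prod_ne_zero_iff.1 hB v (Finset.mem_univ v)
    by_contra hne
    rw [if_neg (fun hI => hne ((pmul_eq_I_iff _ _).1 hI))] at hv
    exact hv rfl
  subst hρσ
  refine ⟨?_, rfl⟩
  simp only [pphase_self, pmul_self, Finset.prod_const_one, one_mul, if_pos rfl] at h2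
  exact mul_right_cancel₀ hP h2

end Lemma2Aux
namespace Lemma2Aux

/-- Product of a list of Paulis, modulo phase. -/
def sprod : List Pauli → Pauli
  | [] => Pauli.I
  | p :: l => pmul p (sprod l)

/-- Accumulated phase of a list of Paulis. -/
noncomputable def sphase : List Pauli → ℂ
  | [] => 1
  | p :: l => pphase p (sprod l) * sphase l

variable {W : Type} [Fintype W] [DecidableEq W]

/-- Master lemma: a product of Pauli products, sitewise. -/
lemma prod_map_pauliProd (L : List (W → Pauli)) :
    (L.map pauliProd).prod =
      (∏ v, sphase (L.map (· v))) • pauliProd (fun v => sprod (L.map (· v))) := by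
  induction L with
  | nil => simp [sphase, sprod, pauliProd_constI]
  | cons σ L ih =>
      rw [List.map_cons, List.prod_cons, ih, mul_smul_comm, pauliProd_mul, smul_smul]
      simp only [List.map_cons]
      congr 1
      rw [← Finset.prod_mul_distrib]
      refine Finset.prod_congr rfl fun v _ => ?_
      show sphase (L.map (· v)) * (pphase (σ v) (sprod (L.map (· v)))) = _
      rw [mul_comm]
      rfl

lemma sprod_all_I {l : List Pauli} (h : ∀ p ∈ l, p = Pauli.I) :
    sprod l = Pauli.I := by
  induction l with
  | nil => rfl
  | cons p l ih =>
      rw [sprod, h p (List.mem_cons_self), ih fun q hq => h q (List.mem_cons_of_mem _ hq)]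
      rfl

lemma sphase_all_I {l : List Pauli} (h : ∀ p ∈ l, p = Pauli.I) :
    sphase l = 1 := by
  induction l with
  | nil => rfl
  | cons p l ih =>
      rw [sphase, h p (List.mem_cons_self), ih fun q hq => h q (List.mem_cons_of_mem _ hq),
        pphase_I_left, one_mul]

lemma LZ {l : List Pauli} (h : ∀ p ∈ l, p = Pauli.I ∨ p = Pauli.Z) :
    sphase l = 1 ∧ sprod l = (if Even (l.count Pauli.Z) then Pauli.I else Pauli.Z) := by
  induction l with
  | nil => simp [sphase, sprod]
  | cons p l ih =>
      obtain ⟨ih1, ih2⟩ := ih fun q hq => h q (List.mem_cons_of_mem _ hq)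
      rcases h p (List.mem_cons_self) with hp | hp <;> subst hp
      · rw [sphase, sprod, ih1, ih2, List.count_cons]
        constructor
        · split <;> simp [pphase_I_left]
        · simp [pmul]
      · rw [sphase, sprod, ih1, ih2, List.count_cons]
        constructor
        · split <;> simp [pphase]
        · rcases Nat.even_or_odd (l.count Pauli.Z) with he | he
          · simp [he, Nat.even_add_one, pmul, Nat.not_even_iff_odd, he.add_one]
          · simp [Nat.not_even_iff_odd.2 he, pmul, (he.add_one)]

lemma LX {l : List Pauli} (h : ∀ p ∈ l, p = Pauli.I ∨ p = Pauli.X) :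
    sphase l = 1 ∧ sprod l = (if Even (l.count Pauli.X) then Pauli.I else Pauli.X) := by
  induction l with
  | nil => simp [sphase, sprod]
  | cons p l ih =>
      obtain ⟨ih1, ih2⟩ := ih fun q hq => h q (List.mem_cons_of_mem _ hq)
      rcases h p (List.mem_cons_self) with hp | hp <;> subst hp
      · rw [sphase, sprod, ih1, ih2, List.count_cons]
        constructor
        · split <;> simp [pphase_I_left]
        · simp [pmul]
      · rw [sphase, sprod, ih1, ih2, List.count_cons]
        constructor
        · split <;> simp [pphase]
        · rcases Nat.even_or_odd (l.count Pauli.X) with he | he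
          · simp [he, Nat.even_add_one, pmul, Nat.not_even_iff_odd, he.add_one]
          · simp [Nat.not_even_iff_odd.2 he, pmul, (he.add_one)]

end Lemma2Aux
namespace Lemma2Aux

lemma count_map_range (g : ℕ → Pauli) (q : Pauli) (d : ℕ) :
    (((List.range d).map g).count q) = ∑ s ∈ Finset.range d, if g s = q then 1 else 0 := by
  induction d with
  | zero => simp
  | succ n ih =>
      rw [List.range_succ, List.map_append, List.count_append, ih, Finset.sum_range_succ]
      by_cases h : g n = q <;> simp [h, List.count_singleton]

lemma sum_ite_unique {d : ℕ} (P : ℕ → Prop) [DecidablePred P] (s₀ : ℕ)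
    (h : ∀ s < d, (P s ↔ s = s₀)) (hs : s₀ < d) :
    (∑ s ∈ Finset.range d, if P s then 1 else 0) = 1 := by
  rw [Finset.sum_congr rfl (fun s hsm => by
    rw [if_congr (h s (Finset.mem_range.1 hsm)) rfl rfl])]
  rw [Finset.sum_ite_eq' (Finset.range d) s₀ (fun _ => 1), if_pos (Finset.mem_range.2 hs)]

lemma sum_ite_none {d : ℕ} (P : ℕ → Prop) [DecidablePred P]
    (h : ∀ s < d, ¬ P s) :
    (∑ s ∈ Finset.range d, if P s then 1 else 0) = 0 := by
  rw [Finset.sum_congr rfl (fun s hsm => by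
    rw [if_neg (h s (Finset.mem_range.1 hsm))])]
  simp

lemma sum_ite_pair {d : ℕ} (P : ℕ → Prop) [DecidablePred P] (s₁ s₂ : ℕ)
    (h : ∀ s < d, (P s ↔ s = s₁ ∨ s = s₂)) (h1 : s₁ < d) (h2 : s₂ < d) (hne : s₁ ≠ s₂) :
    (∑ s ∈ Finset.range d, if P s then 1 else 0) = 2 := by
  have : ∀ s ∈ Finset.range d, (if P s then (1:ℕ) else 0) =
      (if s = s₁ then 1 else 0) + (if s = s₂ then 1 else 0) := by
    intro s hsm
    rcases (h s (Finset.mem_range.1 hsm)) with hiff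
    by_cases e1 : s = s₁
    · subst e1; simp [hiff, hne]
    · by_cases e2 : s = s₂
      · subst e2; simp [hiff, e1]
      · have hnP : ¬ P s := fun hP => by
          rcases hiff.1 hP with h' | h'
          exacts [e1 h', e2 h']
        simp [e1, e2, hnP]
  rw [Finset.sum_congr rfl this, Finset.sum_add_distrib,
    Finset.sum_ite_eq' (Finset.range d) s₁ (fun _ => 1),
    Finset.sum_ite_eq' (Finset.range d) s₂ (fun _ => 1),
    if_pos (Finset.mem_range.2 h1), if_pos (Finset.mem_range.2 h2)]

/-- The word of a graph-state generator. -/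
noncomputable def gwd {W : Type} [Fintype W] [DecidableEq W] (G : SimpleGraph W) (w : W) :
    W → Pauli :=
  fun v => if v = w then Pauli.X else if G.Adj v w then Pauli.Z else Pauli.I

lemma graphGen_eq {W : Type} [Fintype W] [DecidableEq W] (G : SimpleGraph W) (w : W) :
    graphGen G w = pauliProd (gwd G w) := rfl

section Infl

variable {V : Type} [Fintype V] [DecidableEq V] (m d : ℕ) (e : Fin m → V × V)

lemma infl_adj_inl_inl (u w : V) : ¬ (inflGraph m d e).Adj (Sum.inl u) (Sum.inl w) := by
  simp [inflGraph, SimpleGraph.fromRel_adj, inflAdj]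

lemma infl_adj_inr_inl (j : Fin m) (k : Fin (2*d)) (u : V) :
    (inflGraph m d e).Adj (Sum.inr (j, k)) (Sum.inl u) ↔
      ((e j).1 = u ∧ (k : ℕ) = 0) ∨ ((e j).2 = u ∧ (k : ℕ) = 2*d - 1) := by
  simp [inflGraph, SimpleGraph.fromRel_adj, inflAdj]

lemma infl_adj_inr_inr (j j' : Fin m) (k k' : Fin (2*d)) :
    (inflGraph m d e).Adj (Sum.inr (j, k)) (Sum.inr (j', k')) ↔
      j = j' ∧ ((k : ℕ) + 1 = (k' : ℕ) ∨ (k' : ℕ) + 1 = (k : ℕ)) := by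
  simp only [inflGraph, SimpleGraph.fromRel_adj, inflAdj]
  constructor
  · rintro ⟨hne, ⟨hj, hk⟩ | ⟨hj, hk⟩⟩
    · exact ⟨hj, Or.inl hk⟩
    · exact ⟨hj.symm, Or.inr hk⟩
  · rintro ⟨rfl, hk | hk⟩
    · refine ⟨?_, Or.inl ⟨rfl, hk⟩⟩
      intro hc
      have : k = k' := by
        have := Sum.inr.inj hc
        exact (Prod.ext_iff.1 this).2
      omega
    · refine ⟨?_, Or.inr ⟨rfl, hk⟩⟩
      intro hc
      have : k = k' := by
        have := Sum.inr.inj hc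
        exact (Prod.ext_iff.1 this).2
      omega

lemma gwd_inl_inl (u w : V) :
    gwd (inflGraph m d e) (Sum.inl u) (Sum.inl w) = if w = u then Pauli.X else Pauli.I := by
  by_cases h : w = u
  · subst h; simp [gwd]
  · simp [gwd, h, infl_adj_inl_inl]

lemma gwd_inl_inr (u : V) (j : Fin m) (k : Fin (2*d)) :
    gwd (inflGraph m d e) (Sum.inl u) (Sum.inr (j, k)) =
      if ((e j).1 = u ∧ (k : ℕ) = 0) ∨ ((e j).2 = u ∧ (k : ℕ) = 2*d - 1) then Pauli.Z
      else Pauli.I := by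
  rw [gwd, if_neg (by simp), if_congr (infl_adj_inr_inl m d e j k u) rfl rfl]

lemma gwd_inr_inl (j : Fin m) (k : Fin (2*d)) (w : V) :
    gwd (inflGraph m d e) (Sum.inr (j, k)) (Sum.inl w) =
      if ((e j).1 = w ∧ (k : ℕ) = 0) ∨ ((e j).2 = w ∧ (k : ℕ) = 2*d - 1) then Pauli.Z
      else Pauli.I := by
  rw [gwd, if_neg (by simp)]
  rw [if_congr ((inflGraph m d e).adj_comm _ _) rfl rfl,
    if_congr (infl_adj_inr_inl m d e j k w) rfl rfl]

lemma gwd_inr_inr (j : Fin m) (c : Fin (2*d)) (j' : Fin m) (k : Fin (2*d)) :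
    gwd (inflGraph m d e) (Sum.inr (j, c)) (Sum.inr (j', k)) =
      if j' = j ∧ (k : ℕ) = (c : ℕ) then Pauli.X
      else if j' = j ∧ ((k : ℕ) + 1 = (c : ℕ) ∨ (c : ℕ) + 1 = (k : ℕ)) then Pauli.Z
      else Pauli.I := by
  rw [gwd]
  have h1 : (Sum.inr (j', k) : V ⊕ (Fin m × Fin (2*d))) = Sum.inr (j, c) ↔
      j' = j ∧ (k : ℕ) = (c : ℕ) := by
    constructor
    · intro h
      have := Sum.inr.inj h
      exact ⟨(Prod.ext_iff.1 this).1, congrArg Fin.val (Prod.ext_iff.1 this).2⟩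
    · rintro ⟨rfl, hk⟩
      have : k = c := Fin.ext hk
      rw [this]
  rw [if_congr h1 rfl rfl, if_congr (infl_adj_inr_inr m d e j' j k c) rfl rfl]

end Infl

end Lemma2Aux
namespace Lemma2Aux

section Infl2

variable {V : Type} [Fintype V] [DecidableEq V] (m d : ℕ) (e : Fin m → V × V)

/-- Word of the chain generator used in `inflGen`. -/
noncomputable def cw (u : V) (j : Fin m) (s : ℕ) : (V ⊕ (Fin m × Fin (2 * d))) → Pauli :=
  if h : s < d then
    if (e j).1 = u then gwd (inflGraph m d e) (Sum.inr (j, ⟨2*s+1, by omega⟩))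
    else if (e j).2 = u then gwd (inflGraph m d e) (Sum.inr (j, ⟨2*d-2*s-2, by omega⟩))
    else fun _ => Pauli.I
  else fun _ => Pauli.I

/-- The list of generator words whose product is `inflGen u`. -/
noncomputable def Wlist (u : V) : List ((V ⊕ (Fin m × Fin (2 * d))) → Pauli) :=
  gwd (inflGraph m d e) (Sum.inl u) ::
    ((List.finRange m).map (fun j => (List.range d).map (fun s => cw m d e u j s))).flatten

lemma pauliProd_cw (u : V) (j : Fin m) (s : ℕ) (hs : s < d) :
    pauliProd (cw m d e u j s) =
      (if (e j).1 = u then chainGen m d e j (2*s+1)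
       else if (e j).2 = u then chainGen m d e j (2*d-2*s-2) else 1) := by
  rw [cw, dif_pos hs]
  by_cases h1 : (e j).1 = u
  · rw [if_pos h1, if_pos h1, chainGen, dif_pos (by omega : 2*s+1 < 2*d), graphGen_eq]
  · rw [if_neg h1, if_neg h1]
    by_cases h2 : (e j).2 = u
    · rw [if_pos h2, if_pos h2, chainGen, dif_pos (by omega : 2*d-2*s-2 < 2*d), graphGen_eq]
    · rw [if_neg h2, if_neg h2, pauliProd_constI]

lemma inflGen_eq (u : V) :
    inflGen m d e u = ((Wlist m d e u).map pauliProd).prod := by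
  rw [Wlist, List.map_cons, List.prod_cons, ← graphGen_eq, inflGen]
  congr 1
  rw [List.map_flatten, List.prod_flatten, List.map_map, List.map_map]
  congr 1
  refine List.map_congr_left fun j _ => ?_
  simp only [Function.comp, List.map_map]
  congr 1
  refine List.map_congr_left fun s hs => ?_
  exact (pauliProd_cw m d e u j s (List.mem_range.1 hs)).symm

lemma siteL (u : V) (v : V ⊕ (Fin m × Fin (2 * d))) :
    (Wlist m d e u).map (· v) =
      gwd (inflGraph m d e) (Sum.inl u) v ::
        ((List.finRange m).map (fun j => (List.range d).map (fun s => cw m d e u j s v))).flatten := by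
  rw [Wlist, List.map_cons]
  congr 1
  rw [List.map_flatten, List.map_map]
  congr 1
  refine List.map_congr_left fun j _ => ?_
  simp [List.map_map, Function.comp]

lemma count_tail (u : V) (v : V ⊕ (Fin m × Fin (2 * d))) (q : Pauli) :
    (((List.finRange m).map (fun j => (List.range d).map (fun s => cw m d e u j s v))).flatten).count q
      = ∑ j : Fin m, ∑ s ∈ Finset.range d, if cw m d e u j s v = q then 1 else 0 := by
  rw [List.count_flatten, List.map_map, Fin.sum_univ_def]
  congr 1
  refine List.map_congr_left fun j _ => ?_
  exact count_map_range _ q d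

lemma mem_tail (u : V) (v : V ⊕ (Fin m × Fin (2 * d))) (p : Pauli) :
    p ∈ ((List.finRange m).map (fun j => (List.range d).map (fun s => cw m d e u j s v))).flatten ↔
      ∃ j, ∃ s < d, p = cw m d e u j s v := by
  simp only [List.mem_flatten, List.mem_map, List.mem_finRange, List.mem_range]
  constructor
  · rintro ⟨l, ⟨j, -, rfl⟩, hp⟩
    obtain ⟨s, hs, rfl⟩ := List.mem_map.1 hp
    exact ⟨j, s, List.mem_range.1 hs, rfl⟩
  · rintro ⟨j, s, hs, rfl⟩
    exact ⟨_, ⟨j, trivial, rfl⟩, List.mem_map.2 ⟨s, List.mem_range.2 hs, rfl⟩⟩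

lemma ite_ZI_eq_Z {C : Prop} [Decidable C] :
    (if C then Pauli.Z else Pauli.I) = Pauli.Z ↔ C := by
  by_cases h : C <;> simp [h]

lemma ite_ZI_mem {C : Prop} [Decidable C] :
    (if C then Pauli.Z else Pauli.I) = Pauli.I ∨ (if C then Pauli.Z else Pauli.I) = Pauli.Z := by
  by_cases h : C <;> simp [h]

lemma ite_XI_mem {C : Prop} [Decidable C] :
    (if C then Pauli.X else Pauli.I) = Pauli.I ∨ (if C then Pauli.X else Pauli.I) = Pauli.X := by
  by_cases h : C <;> simp [h]

end Infl2

end Lemma2Aux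
namespace Lemma2Aux

section Infl3

variable {V : Type} [Fintype V] [DecidableEq V] (m d : ℕ) (e : Fin m → V × V)

lemma helem_inl (hd : 0 < d) (hloop : ∀ j, (e j).1 ≠ (e j).2) (u w : V)
    (j : Fin m) (s : ℕ) (hs : s < d) :
    cw m d e u j s (Sum.inl w) =
      if (e j = (u, w) ∨ e j = (w, u)) ∧ s = d - 1 then Pauli.Z else Pauli.I := by
  rw [cw, dif_pos hs]
  by_cases h1 : (e j).1 = u
  · rw [if_pos h1, gwd_inr_inl]
    refine if_congr ?_ rfl rfl
    constructor
    · rintro (⟨-, hk⟩ | ⟨h2, hk⟩)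
      · exact absurd hk (by simp)
      · refine ⟨Or.inl ?_, by simp at hk; omega⟩
        rw [Prod.ext_iff]; exact ⟨h1, h2⟩
    · rintro ⟨hj | hj, rfl⟩
      · refine Or.inr ⟨?_, by simp; omega⟩
        rw [hj]
      · exfalso; apply hloop j; rw [hj] at h1 ⊢; simp_all
  · rw [if_neg h1]
    by_cases h2 : (e j).2 = u
    · rw [if_pos h2, gwd_inr_inl]
      refine if_congr ?_ rfl rfl
      constructor
      · rintro (⟨hw, hk⟩ | ⟨hw, hk⟩)
        · refine ⟨Or.inr ?_, by simp at hk; omega⟩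
          rw [Prod.ext_iff]; exact ⟨hw, h2⟩
        · simp at hk; omega
      · rintro ⟨hj | hj, rfl⟩
        · exfalso; apply h1; rw [hj]
        · refine Or.inl ⟨?_, by simp; omega⟩
          rw [hj]
    · rw [if_neg h2]
      rw [if_neg ?_]
      rintro ⟨hj | hj, -⟩
      · exact h1 (by rw [hj])
      · exact h2 (by rw [hj])

lemma site_inl (hd : 0 < d) (hloop : ∀ j, (e j).1 ≠ (e j).2)
    (hinj : Function.Injective e) (hor : ∀ j j', e j ≠ ((e j').2, (e j').1)) (u w : V) :
    sphase ((Wlist m d e u).map (· (Sum.inl w))) = 1 ∧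
    sprod ((Wlist m d e u).map (· (Sum.inl w))) = gwd (origGraph m e) u w := by
  rw [siteL, gwd_inl_inl]
  set T := ((List.finRange m).map
    (fun j => (List.range d).map (fun s => cw m d e u j s (Sum.inl w)))).flatten with hT
  by_cases hw : w = u
  · have hTI : ∀ p ∈ T, p = Pauli.I := by
      intro p hp
      obtain ⟨j, s, hs, rfl⟩ := (mem_tail m d e u _ p).1 hp
      rw [helem_inl m d e hd hloop u w j s hs, if_neg]
      rintro ⟨hj | hj, -⟩
      · exact hloop j (by rw [hj]; exact hw.symm)
      · exact hloop j (by rw [hj]; exact hw)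
    rw [if_pos hw]
    constructor
    · rw [sphase, sprod_all_I hTI, sphase_all_I hTI, pphase_I_right, one_mul]
    · rw [sprod, sprod_all_I hTI, pmul_I, gwd, if_pos hw]
  · rw [if_neg hw]
    have hTZ : ∀ p ∈ T, p = Pauli.I ∨ p = Pauli.Z := by
      intro p hp
      obtain ⟨j, s, hs, rfl⟩ := (mem_tail m d e u _ p).1 hp
      rw [helem_inl m d e hd hloop u w j s hs]
      exact ite_ZI_mem
    obtain ⟨hph, hpr⟩ := LZ hTZ
    have hcount : T.count Pauli.Z = ∑ j : Fin m,
        if (e j = (u, w) ∨ e j = (w, u)) then 1 else 0 := by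
      rw [hT, count_tail]
      refine Finset.sum_congr rfl fun j _ => ?_
      by_cases hP : e j = (u, w) ∨ e j = (w, u)
      · rw [if_pos hP]
        refine sum_ite_unique _ (d-1) (fun s hs => ?_) (by omega)
        rw [helem_inl m d e hd hloop u w j s hs, ite_ZI_eq_Z]
        constructor
        · rintro ⟨-, h⟩; exact h
        · intro h; exact ⟨hP, h⟩
      · rw [if_neg hP]
        refine sum_ite_none _ (fun s hs => ?_)
        rw [helem_inl m d e hd hloop u w j s hs, ite_ZI_eq_Z]
        rintro ⟨h, -⟩; exact hP h
    by_cases hadj : ∃ j, e j = (u, w) ∨ e j = (w, u)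
    · obtain ⟨j₀, hj₀⟩ := hadj
      have huniq : ∀ j, (e j = (u, w) ∨ e j = (w, u)) ↔ j = j₀ := by
        intro j
        constructor
        · rintro (hj | hj)
          · rcases hj₀ with h₀ | h₀
            · exact hinj (by rw [hj, h₀])
            · exact absurd (by rw [hj, h₀] : e j = ((e j₀).2, (e j₀).1)) (hor j j₀)
          · rcases hj₀ with h₀ | h₀
            · exact absurd (by rw [hj, h₀] : e j = ((e j₀).2, (e j₀).1)) (hor j j₀)
            · exact hinj (by rw [hj, h₀])
        · rintro rfl; exact hj₀
      have hc1 : T.count Pauli.Z = 1 := by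
        rw [hcount, Finset.sum_congr rfl (fun j _ => if_congr (huniq j) rfl rfl),
          Finset.sum_ite_eq' Finset.univ j₀ (fun _ => 1), if_pos (Finset.mem_univ j₀)]
      have hAdj : (origGraph m e).Adj w u := by
        rw [origGraph, SimpleGraph.fromRel_adj]
        refine ⟨hw, ?_⟩
        rcases hj₀ with h | h
        · exact Or.inr ⟨j₀, h⟩
        · exact Or.inl ⟨j₀, h⟩
      constructor
      · rw [sphase, hph, hpr, hc1, mul_one]
        norm_num [pphase_I_left]
      · rw [sprod, hpr, hc1, gwd, if_neg hw, if_pos hAdj]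
        norm_num [pmul]
    · have hc0 : T.count Pauli.Z = 0 := by
        rw [hcount]
        refine Finset.sum_eq_zero fun j _ => if_neg fun h => hadj ⟨j, h⟩
      have hAdj : ¬ (origGraph m e).Adj w u := by
        rw [origGraph, SimpleGraph.fromRel_adj]
        rintro ⟨-, ⟨j, hj⟩ | ⟨j, hj⟩⟩
        · exact hadj ⟨j, Or.inr hj⟩
        · exact hadj ⟨j, Or.inl hj⟩
      constructor
      · rw [sphase, hph, hpr, hc0, mul_one]
        norm_num [pphase_I_left]
      · rw [sprod, hpr, hc0, gwd, if_neg hw, if_neg hAdj]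
        norm_num [pmul]

end Infl3

end Lemma2Aux
namespace Lemma2Aux

section Infl4

variable {V : Type} [Fintype V] [DecidableEq V] (m d : ℕ) (e : Fin m → V × V)

lemma gwd_inr_same (j : Fin m) (c : ℕ) (hc : c < 2*d) (k : Fin (2*d)) :
    gwd (inflGraph m d e) (Sum.inr (j, ⟨c, hc⟩)) (Sum.inr (j, k)) =
      if (k : ℕ) = c then Pauli.X
      else if ((k : ℕ) + 1 = c ∨ c + 1 = (k : ℕ)) then Pauli.Z
      else Pauli.I := by
  rw [gwd_inr_inr]
  simp

lemma gwd_inr_other (j' : Fin m) (c : Fin (2*d)) (j : Fin m) (k : Fin (2*d)) (hne : j ≠ j') :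
    gwd (inflGraph m d e) (Sum.inr (j', c)) (Sum.inr (j, k)) = Pauli.I := by
  rw [gwd_inr_inr, if_neg (fun h => hne h.1), if_neg (fun h => hne h.1)]

lemma helem_ne (u : V) (j' : Fin m) (s : ℕ) (hs : s < d) (j : Fin m) (k : Fin (2*d))
    (hne : j ≠ j') :
    cw m d e u j' s (Sum.inr (j, k)) = Pauli.I := by
  rw [cw, dif_pos hs]
  by_cases h1 : (e j').1 = u
  · rw [if_pos h1, gwd_inr_other m d e j' _ j k hne]
  · rw [if_neg h1]
    by_cases h2 : (e j').2 = u
    · rw [if_pos h2, gwd_inr_other m d e j' _ j k hne]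
    · rw [if_neg h2]

lemma site_inr (hd : 0 < d) (hloop : ∀ j, (e j).1 ≠ (e j).2) (u : V)
    (j : Fin m) (k : Fin (2*d)) :
    sphase ((Wlist m d e u).map (· (Sum.inr (j, k)))) = 1 ∧
    (sprod ((Wlist m d e u).map (· (Sum.inr (j, k)))) = Pauli.X ∨
     sprod ((Wlist m d e u).map (· (Sum.inr (j, k)))) = Pauli.I) := by
  rw [siteL, gwd_inl_inr]
  set T := ((List.finRange m).map
    (fun j' => (List.range d).map (fun s => cw m d e u j' s (Sum.inr (j, k))))).flatten with hT
  have hk : (k : ℕ) < 2*d := k.isLt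
  by_cases h1 : (e j).1 = u
  · -- chain j is traversed from its first endpoint
    have h2 : ¬ (e j).2 = u := fun h => hloop j (by rw [h1, h])
    have helemA : ∀ s, s < d → cw m d e u j s (Sum.inr (j, k)) =
        if (k : ℕ) = 2*s+1 then Pauli.X
        else if ((k : ℕ) + 1 = 2*s+1 ∨ 2*s+2 = (k : ℕ)) then Pauli.Z
        else Pauli.I := by
      intro s hs
      rw [cw, dif_pos hs, if_pos h1, gwd_inr_same]
    rcases Nat.even_or_odd (k : ℕ) with he | ho
    · -- even position: only Z's, an even number of them
      obtain ⟨t, ht⟩ := he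
      have hhead : (if ((e j).1 = u ∧ (k : ℕ) = 0) ∨ ((e j).2 = u ∧ (k : ℕ) = 2*d-1)
          then Pauli.Z else Pauli.I) = if (k : ℕ) = 0 then Pauli.Z else Pauli.I := by
        refine if_congr ?_ rfl rfl
        constructor
        · rintro (⟨-, h⟩ | ⟨h', -⟩)
          · exact h
          · exact absurd h' h2
        · intro h; exact Or.inl ⟨h1, h⟩
      rw [hhead]
      have hmem : ∀ p ∈ (if (k : ℕ) = 0 then Pauli.Z else Pauli.I) :: T,
          p = Pauli.I ∨ p = Pauli.Z := by
        intro p hp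
        rcases List.mem_cons.1 hp with rfl | hp
        · exact ite_ZI_mem
        · obtain ⟨j', s, hs, rfl⟩ := (mem_tail m d e u _ p).1 hp
          by_cases hj' : j = j'
          · subst hj'
            rw [helemA s hs, if_neg (by omega)]
            exact ite_ZI_mem
          · rw [helem_ne m d e u j' s hs j k hj']
            exact Or.inl rfl
      obtain ⟨hph, hpr⟩ := LZ hmem
      have hcT : T.count Pauli.Z = (if (k : ℕ) = 0 then 1 else 2) := by
        rw [hT, count_tail]
        rw [Finset.sum_eq_single_of_mem j (Finset.mem_univ j)
          (fun j' _ hne => sum_ite_none _ (fun s hs => by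
            rw [helem_ne m d e u j' s hs j k (Ne.symm hne)]; simp))]
        by_cases h0 : (k : ℕ) = 0
        · rw [if_pos h0]
          refine sum_ite_unique _ 0 (fun s hs => ?_) hd
          rw [helemA s hs, if_neg (by omega), ite_ZI_eq_Z]
          omega
        · rw [if_neg h0]
          refine sum_ite_pair _ t (t-1) (fun s hs => ?_) (by omega) (by omega) (by omega)
          rw [helemA s hs, if_neg (by omega), ite_ZI_eq_Z]
          omega
      have hcount : ((if (k : ℕ) = 0 then Pauli.Z else Pauli.I) :: T).count Pauli.Z = 2 := by
        rw [List.count_cons, hcT]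
        by_cases h0 : (k : ℕ) = 0 <;> simp [h0]
      refine ⟨hph, Or.inr ?_⟩
      rw [hpr, hcount]
      norm_num
    · -- odd position: only X's
      obtain ⟨t, ht⟩ := ho
      have hhead : (if ((e j).1 = u ∧ (k : ℕ) = 0) ∨ ((e j).2 = u ∧ (k : ℕ) = 2*d-1)
          then Pauli.Z else Pauli.I) = Pauli.I := by
        rw [if_neg]
        rintro (⟨-, h⟩ | ⟨h', -⟩)
        · omega
        · exact h2 h'
      rw [hhead]
      have hmem : ∀ p ∈ Pauli.I :: T, p = Pauli.I ∨ p = Pauli.X := by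
        intro p hp
        rcases List.mem_cons.1 hp with rfl | hp
        · exact Or.inl rfl
        · obtain ⟨j', s, hs, rfl⟩ := (mem_tail m d e u _ p).1 hp
          by_cases hj' : j = j'
          · subst hj'
            rw [helemA s hs]
            by_cases hx : (k : ℕ) = 2*s+1
            · rw [if_pos hx]; exact Or.inr rfl
            · rw [if_neg hx, if_neg (by omega)]; exact Or.inl rfl
          · rw [helem_ne m d e u j' s hs j k hj']
            exact Or.inl rfl
      obtain ⟨hph, hpr⟩ := LX hmem
      refine ⟨hph, ?_⟩
      rw [hpr]
      split
      · exact Or.inr rfl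
      · exact Or.inl rfl
  · by_cases h2 : (e j).2 = u
    · -- chain j is traversed from its second endpoint
      have helemB : ∀ s, s < d → cw m d e u j s (Sum.inr (j, k)) =
          if (k : ℕ) = 2*d-2*s-2 then Pauli.X
          else if ((k : ℕ) + 1 = 2*d-2*s-2 ∨ (2*d-2*s-2) + 1 = (k : ℕ)) then Pauli.Z
          else Pauli.I := by
        intro s hs
        rw [cw, dif_pos hs, if_neg h1, if_pos h2, gwd_inr_same]
      rcases Nat.even_or_odd (k : ℕ) with he | ho
      · -- even position: only X's
        obtain ⟨t, ht⟩ := he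
        have hhead : (if ((e j).1 = u ∧ (k : ℕ) = 0) ∨ ((e j).2 = u ∧ (k : ℕ) = 2*d-1)
            then Pauli.Z else Pauli.I) = Pauli.I := by
          rw [if_neg]
          rintro (⟨h', -⟩ | ⟨-, h⟩)
          · exact h1 h'
          · omega
        rw [hhead]
        have hmem : ∀ p ∈ Pauli.I :: T, p = Pauli.I ∨ p = Pauli.X := by
          intro p hp
          rcases List.mem_cons.1 hp with rfl | hp
          · exact Or.inl rfl
          · obtain ⟨j', s, hs, rfl⟩ := (mem_tail m d e u _ p).1 hp
            by_cases hj' : j = j'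
            · subst hj'
              rw [helemB s hs]
              by_cases hx : (k : ℕ) = 2*d-2*s-2
              · rw [if_pos hx]; exact Or.inr rfl
              · rw [if_neg hx, if_neg (by omega)]; exact Or.inl rfl
            · rw [helem_ne m d e u j' s hs j k hj']
              exact Or.inl rfl
        obtain ⟨hph, hpr⟩ := LX hmem
        refine ⟨hph, ?_⟩
        rw [hpr]
        split
        · exact Or.inr rfl
        · exact Or.inl rfl
      · -- odd position: only Z's, an even number of them
        obtain ⟨t, ht⟩ := ho
        have hhead : (if ((e j).1 = u ∧ (k : ℕ) = 0) ∨ ((e j).2 = u ∧ (k : ℕ) = 2*d-1)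
            then Pauli.Z else Pauli.I) = if (k : ℕ) = 2*d-1 then Pauli.Z else Pauli.I := by
          refine if_congr ?_ rfl rfl
          constructor
          · rintro (⟨h', -⟩ | ⟨-, h⟩)
            · exact absurd h' h1
            · exact h
          · intro h; exact Or.inr ⟨h2, h⟩
        rw [hhead]
        have hmem : ∀ p ∈ (if (k : ℕ) = 2*d-1 then Pauli.Z else Pauli.I) :: T,
            p = Pauli.I ∨ p = Pauli.Z := by
          intro p hp
          rcases List.mem_cons.1 hp with rfl | hp
          · exact ite_ZI_mem
          · obtain ⟨j', s, hs, rfl⟩ := (mem_tail m d e u _ p).1 hp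
            by_cases hj' : j = j'
            · subst hj'
              rw [helemB s hs, if_neg (by omega)]
              exact ite_ZI_mem
            · rw [helem_ne m d e u j' s hs j k hj']
              exact Or.inl rfl
        obtain ⟨hph, hpr⟩ := LZ hmem
        have hcT : T.count Pauli.Z = (if (k : ℕ) = 2*d-1 then 1 else 2) := by
          rw [hT, count_tail]
          rw [Finset.sum_eq_single_of_mem j (Finset.mem_univ j)
            (fun j' _ hne => sum_ite_none _ (fun s hs => by
              rw [helem_ne m d e u j' s hs j k (Ne.symm hne)]; simp))]
          by_cases h0 : (k : ℕ) = 2*d-1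
          · rw [if_pos h0]
            refine sum_ite_unique _ 0 (fun s hs => ?_) hd
            rw [helemB s hs, if_neg (by omega), ite_ZI_eq_Z]
            omega
          · rw [if_neg h0]
            refine sum_ite_pair _ (d-t-2) (d-t-1) (fun s hs => ?_)
              (by omega) (by omega) (by omega)
            rw [helemB s hs, if_neg (by omega), ite_ZI_eq_Z]
            omega
        have hcount : ((if (k : ℕ) = 2*d-1 then Pauli.Z else Pauli.I) :: T).count Pauli.Z
            = 2 := by
          rw [List.count_cons, hcT]
          by_cases h0 : (k : ℕ) = 2*d-1 <;> simp [h0]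
        refine ⟨hph, Or.inr ?_⟩
        rw [hpr, hcount]
        norm_num
    · -- chain j is not incident to u
      have hhead : (if ((e j).1 = u ∧ (k : ℕ) = 0) ∨ ((e j).2 = u ∧ (k : ℕ) = 2*d-1)
          then Pauli.Z else Pauli.I) = Pauli.I := by
        rw [if_neg]
        rintro (⟨h', -⟩ | ⟨h', -⟩)
        · exact h1 h'
        · exact h2 h'
      rw [hhead]
      have hmem : ∀ p ∈ Pauli.I :: T, p = Pauli.I := by
        intro p hp
        rcases List.mem_cons.1 hp with rfl | hp
        · rfl
        · obtain ⟨j', s, hs, rfl⟩ := (mem_tail m d e u _ p).1 hp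
          by_cases hj' : j = j'
          · subst hj'
            rw [cw, dif_pos hs, if_neg h1, if_neg h2]
          · exact helem_ne m d e u j' s hs j k hj'
      exact ⟨sphase_all_I hmem, Or.inr (sprod_all_I hmem)⟩

end Infl4

end Lemma2Aux
open Lemma2Aux in
/-- Lemma 2: the inflated stabilizer element `S' = ∏_{u∈U} f_u` has the same sign
`χ` as `S = ∏_{u∈U} g_u`, agrees with `S`'s Pauli operators on power vertices, and
is `X` or `I` on every chain vertex. -/
theorem stmt9 {V : Type} [Fintype V] [LinearOrder V] (m d : ℕ) (hd : 0 < d)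
    (e : Fin m → V × V)
    (hloop : ∀ j, (e j).1 ≠ (e j).2)
    (hinj : Function.Injective e)
    (hor : ∀ j j', e j ≠ ((e j').2, (e j').1))
    (U : Finset V) (χ : ℤ) (hχ : χ = 1 ∨ χ = -1) (σ : V → Pauli)
    (hS : ((U.sort (· ≤ ·)).map (graphGen (origGraph m e))).prod = (χ : ℂ) • pauliProd σ) :
    ∃ σ' : (V ⊕ (Fin m × Fin (2 * d))) → Pauli,
      ((U.sort (· ≤ ·)).map (inflGen m d e)).prod = (χ : ℂ) • pauliProd σ' ∧
      (∀ u : V, σ' (Sum.inl u) = σ u) ∧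
      (∀ c : Fin m × Fin (2 * d), σ' (Sum.inr c) = Pauli.X ∨ σ' (Sum.inr c) = Pauli.I) := by
  classical
  have hχ0 : (χ : ℂ) ≠ 0 := by rcases hχ with h | h <;> simp [h]
  set G0 := origGraph m e with hG0
  set L := U.sort (· ≤ ·) with hL
  have hmap0 : L.map (graphGen G0) = (L.map (gwd G0)).map pauliProd := by
    rw [List.map_map]; rfl
  rw [hmap0, prod_map_pauliProd] at hS
  obtain ⟨hsign, hword⟩ := pauli_extract hχ0 hS
  set fw : V → (V ⊕ (Fin m × Fin (2 * d))) → Pauli :=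
    fun u v => sprod ((Wlist m d e u).map (· v)) with hfw
  have hfgen : ∀ u, inflGen m d e u = pauliProd (fw u) := by
    intro u
    rw [inflGen_eq, prod_map_pauliProd]
    have h1 : (∏ v, sphase ((Wlist m d e u).map (· v))) = 1 := by
      rw [Fintype.prod_sum_type,
        Finset.prod_eq_one (fun w _ => (site_inl m d e hd hloop hinj hor u w).1),
        Finset.prod_eq_one (fun c _ => (site_inr m d e hd hloop u c.1 c.2).1), one_mul]
    rw [h1, one_smul]
  have hmap1 : L.map (inflGen m d e) = (L.map fw).map pauliProd := by
    rw [List.map_map]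
    exact List.map_congr_left fun u _ => hfgen u
  have hA : ∀ w : V, ((L.map fw).map (· (Sum.inl w))) = (L.map (gwd G0)).map (· w) := by
    intro w
    rw [List.map_map, List.map_map]
    exact List.map_congr_left fun u _ => (site_inl m d e hd hloop hinj hor u w).2
  have hmemc : ∀ c : Fin m × Fin (2 * d), ∀ p ∈ (L.map fw).map (· (Sum.inr c)),
      p = Pauli.I ∨ p = Pauli.X := by
    intro c p hp
    rw [List.map_map] at hp
    obtain ⟨u, -, rfl⟩ := List.mem_map.1 hp
    rcases (site_inr m d e hd hloop u c.1 c.2).2 with h | h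
    · exact Or.inr h
    · exact Or.inl h
  refine ⟨fun v => sprod ((L.map fw).map (· v)), ?_, ?_, ?_⟩
  · rw [hmap1, prod_map_pauliProd]
    congr 1
    rw [Fintype.prod_sum_type]
    have h1 : (∏ w : V, sphase ((L.map fw).map (· (Sum.inl w)))) = (χ : ℂ) := by
      rw [← hsign]
      exact Finset.prod_congr rfl fun w _ => by rw [hA w]
    have h2 : (∏ c : Fin m × Fin (2 * d), sphase ((L.map fw).map (· (Sum.inr c)))) = 1 :=
      Finset.prod_eq_one fun c _ => (LX (hmemc c)).1
    rw [h1, h2, mul_one]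
  · intro u
    show sprod ((L.map fw).map (· (Sum.inl u))) = σ u
    rw [hA u]
    exact congrFun hword u
  · intro c
    have h := (LX (hmemc c)).2
    by_cases he : Even (((L.map fw).map (· (Sum.inr c))).count Pauli.X)
    · refine Or.inr ?_
      show sprod ((L.map fw).map (· (Sum.inr c))) = Pauli.I
      rw [h, if_pos he]
    · refine Or.inl ?_
      show sprod ((L.map fw).map (· (Sum.inr c))) = Pauli.X
      rw [h, if_neg he]
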